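/- arXiv:1310.6933 — 2 statements merged into one kernel-verified Lean document; each statement's English description precedes it below -/
import Mathlib

section
/- Let $\bm{x}_n \in \mathcal{D}([0,\infty),\mathbb{R}^k)$ and $\bm{y} \in \mathcal{C}([0,\infty),\mathbb{R}^k)$ with $y_j(0) < B_j$ and $T_{B_j}(y_j) = \widetilde{T}_{B_j}(y_j) < \infty$ for all $1 \le j \le k$, and suppose the minimum $\tau_1 = \min_j T_{B_j}(y_j)$ is attained by a unique index $\eta_1 = j^*$. If each component $x_{j;n} \to y_j$ in $\mathcal{D}([0,\infty),\mathbb{R})$, then $\tau_{1;n} := \min_j T_{B_j}(x_{j;n}) \to \tau_1$, $\bm{x}_n(\tau_{1;n}) \to \bm{y}(\tau_1)$, and for $n$ sufficiently large the set of components of $\bm{x}_n$ attaining their boundary at $\tau_{1;n}$ equals $\{j^*\}$. -/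
open Filter MeasureTheory Set

/-- First passage time of `f` above level `B`. -/
noncomputable def FPT (f : ℝ → ℝ) (B : ℝ) : ℝ := sInf {t : ℝ | 0 < t ∧ B < f t}

/-- Hitting time of `f` at the level `B`. -/
noncomputable def HT (f : ℝ → ℝ) (B : ℝ) : ℝ := sInf {t : ℝ | 0 < t ∧ f t = B}

/-- A real function is càdlàg on `[0,∞)`. -/
def Cadlag (f : ℝ → ℝ) : Prop :=
  (∀ t : ℝ, 0 ≤ t → ContinuousWithinAt f (Set.Ici t) t) ∧
  (∀ t : ℝ, 0 < t → ∃ L : ℝ, Filter.Tendsto f (nhdsWithin t (Set.Iio t)) (nhds L))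



lemma fpt_bddBelow (f : ℝ → ℝ) (B : ℝ) : BddBelow {t : ℝ | 0 < t ∧ B < f t} :=
  ⟨0, fun t ht => ht.1.le⟩

lemma fpt_nonneg (f : ℝ → ℝ) (B : ℝ) : 0 ≤ FPT f B :=
  Real.sInf_nonneg (fun t ht => ht.1.le)

lemma fpt_tendsto_aux (x : ℕ → ℝ → ℝ) (y : ℝ → ℝ) (B : ℝ)
    (hy : ContinuousOn y (Set.Ici 0)) (hy0 : y 0 < B)
    (hfin : {t : ℝ | 0 < t ∧ B < y t}.Nonempty)
    (hH : FPT y B = HT y B)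
    (hconv : ∀ s : ℝ, 0 ≤ s → TendstoUniformlyOn (fun n => x n) y atTop (Set.Icc 0 s)) :
    Tendsto (fun n => FPT (x n) B) atTop (nhds (FPT y B)) := by
  set τ := FPT y B with hτ
  have hτ0 : 0 ≤ τ := fpt_nonneg y B
  -- y is strictly below B on [0, τ)
  have hyltB : ∀ t : ℝ, 0 ≤ t → t < τ → y t < B := by
    intro t ht0 htτ
    rcases eq_or_lt_of_le ht0 with h0 | h0
    · rw [← h0]; exact hy0
    · by_contra h
      push_neg at h
      rcases eq_or_lt_of_le h with hEq | hLt
      · have : HT y B ≤ t := csInf_le ⟨0, fun s hs => hs.1.le⟩ ⟨h0, hEq.symm⟩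
        rw [← hH] at this
        exact absurd htτ (not_lt.2 this)
      · have : τ ≤ t := csInf_le (fpt_bddBelow y B) ⟨h0, hLt⟩
        exact absurd htτ (not_lt.2 this)
  -- eventual nonemptiness (with explicit witness)
  obtain ⟨s0, hs0pos, hs0B⟩ := hfin
  have hne : ∀ᶠ n in atTop, B < x n s0 := by
    have h := Metric.tendstoUniformlyOn_iff.1 (hconv s0 hs0pos.le) (y s0 - B) (by linarith)
    filter_upwards [h] with n hn
    have := hn s0 ⟨hs0pos.le, le_refl _⟩
    rw [Real.dist_eq] at this
    have := abs_lt.1 this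
    linarith [this.1, this.2]
  rw [tendsto_order]
  constructor
  · -- lower bound
    intro a ha
    rcases lt_or_ge a 0 with ha0 | ha0
    · filter_upwards with n
      exact lt_of_lt_of_le ha0 (fpt_nonneg (x n) B)
    · have hτpos : 0 < τ := lt_of_le_of_lt ha0 ha
      set c := (a + τ) / 2 with hc
      have hac : a < c := by rw [hc]; linarith
      have hcτ : c < τ := by rw [hc]; linarith
      have hc0 : 0 ≤ c := by rw [hc]; linarith
      -- max of y on [0, c]
      obtain ⟨t0, ht0mem, ht0max⟩ := (isCompact_Icc :
          IsCompact (Set.Icc (0:ℝ) c)).exists_isMaxOn ⟨0, le_refl _, hc0⟩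
          (hy.mono (Set.Icc_subset_Ici_self))
      have hδ : y t0 < B := hyltB t0 ht0mem.1 (lt_of_le_of_lt ht0mem.2 hcτ)
      have hu := Metric.tendstoUniformlyOn_iff.1 (hconv c hc0) (B - y t0) (by linarith)
      filter_upwards [hne, hu] with n hn1 hn2
      refine lt_of_lt_of_le hac (le_csInf ⟨s0, hs0pos, hn1⟩ ?_)
      intro t ht
      by_contra hlt
      push_neg at hlt
      have htmem : t ∈ Set.Icc (0:ℝ) c := ⟨ht.1.le, hlt.le⟩
      have h1 := hn2 t htmem
      rw [Real.dist_eq] at h1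
      have h2 := abs_lt.1 h1
      have h3 : y t ≤ y t0 := ht0max htmem
      have := ht.2
      linarith [h2.1, h2.2]
  · -- upper bound
    intro a ha
    obtain ⟨s, hs, hsa⟩ := (csInf_lt_iff (fpt_bddBelow y B) ⟨s0, hs0pos, hs0B⟩).1 ha
    obtain ⟨hspos, hsB⟩ := hs
    have hu := Metric.tendstoUniformlyOn_iff.1 (hconv s hspos.le) (y s - B) (by linarith)
    filter_upwards [hu] with n hn
    have := hn s ⟨hspos.le, le_refl _⟩
    rw [Real.dist_eq] at this
    have h2 := abs_lt.1 this
    have hxs : B < x n s := by linarith [h2.1, h2.2]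
    calc FPT (x n) B ≤ s := csInf_le (fpt_bddBelow (x n) B) ⟨hspos, hxs⟩
      _ < a := hsa

/-- Lemma 3 of the paper: componentwise Skorohod convergence
(equivalently locally uniform convergence, `y` being continuous) of the
multivariate paths implies convergence of the triplet
`(τ₁ₙ, xₙ(τ₁ₙ), η₁ₙ) → (τ₁, y(τ₁), η₁)`, where `τ₁` is the minimum of the
component passage times, attained by the unique component `j*`. -/
theorem first_window_triplet_convergence
    (k : ℕ) (x : ℕ → Fin k → ℝ → ℝ) (y : Fin k → ℝ → ℝ) (B : Fin k → ℝ)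
    (hx : ∀ n j, Cadlag (x n j))
    (hy : ∀ j, ContinuousOn (y j) (Set.Ici 0))
    (hy0 : ∀ j, y j 0 < B j)
    (hfin : ∀ j, {t : ℝ | 0 < t ∧ B j < y j t}.Nonempty)
    (hH : ∀ j, FPT (y j) (B j) = HT (y j) (B j))
    (jstar : Fin k)
    (hmin : ∀ j, j ≠ jstar → FPT (y jstar) (B jstar) < FPT (y j) (B j))
    (hconv : ∀ j, ∀ s : ℝ, 0 ≤ s →
      TendstoUniformlyOn (fun n => x n j) (y j) atTop (Set.Icc 0 s)) :
    Tendsto (fun n => ⨅ j, FPT (x n j) (B j)) atTop (nhds (⨅ j, FPT (y j) (B j))) ∧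
    (∀ j, Tendsto (fun n => x n j (⨅ i, FPT (x n i) (B i))) atTop
      (nhds (y j (⨅ i, FPT (y i) (B i))))) ∧
    (∀ᶠ n in atTop,
      {j : Fin k | FPT (x n j) (B j) = ⨅ i, FPT (x n i) (B i)} = {jstar}) := by
  haveI : Nonempty (Fin k) := ⟨jstar⟩
  have hcomp : ∀ j, Tendsto (fun n => FPT (x n j) (B j)) atTop
      (nhds (FPT (y j) (B j))) :=
    fun j => fpt_tendsto_aux (fun n => x n j) (y j) (B j) (hy j) (hy0 j) (hfin j)
      (hH j) (hconv j)
  -- the limit infimum equals the jstar passage time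
  have hτeq : (⨅ j, FPT (y j) (B j)) = FPT (y jstar) (B jstar) := by
    refine le_antisymm (ciInf_le (Set.Finite.bddBelow (Set.finite_range _)) jstar)
      (le_ciInf fun j => ?_)
    rcases eq_or_ne j jstar with rfl | hj
    · exact le_refl _
    · exact (hmin j hj).le
  -- eventual strict separation
  have hsep : ∀ᶠ n in atTop, ∀ j, j ≠ jstar →
      FPT (x n jstar) (B jstar) < FPT (x n j) (B j) := by
    rw [eventually_all]
    intro j
    rcases eq_or_ne j jstar with rfl | hj
    · filter_upwards with n h; exact absurd rfl h
    · set m := (FPT (y jstar) (B jstar) + FPT (y j) (B j)) / 2 with hm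
      have h1 := (tendsto_order.1 (hcomp jstar)).2 m (by have := hmin j hj; rw [hm]; linarith)
      have h2 := (tendsto_order.1 (hcomp j)).1 m (by have := hmin j hj; rw [hm]; linarith)
      filter_upwards [h1, h2] with n hn1 hn2 _
      exact lt_trans hn1 hn2
  -- eventually the infimum is attained at jstar
  have hminxn : ∀ᶠ n in atTop,
      (⨅ i, FPT (x n i) (B i)) = FPT (x n jstar) (B jstar) := by
    filter_upwards [hsep] with n hn
    refine le_antisymm (ciInf_le (Set.Finite.bddBelow (Set.finite_range _)) jstar)
      (le_ciInf fun j => ?_)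
    rcases eq_or_ne j jstar with rfl | hj
    · exact le_refl _
    · exact (hn j hj).le
  have part1 : Tendsto (fun n => ⨅ j, FPT (x n j) (B j)) atTop
      (nhds (⨅ j, FPT (y j) (B j))) := by
    rw [hτeq]
    exact Tendsto.congr' (hminxn.mono fun n h => h.symm) (hcomp jstar)
  refine ⟨part1, ?_, ?_⟩
  · -- convergence of the values at the passage times
    intro j
    set τ := ⨅ i, FPT (y i) (B i) with hτdef
    have hτ0 : 0 ≤ τ := le_ciInf fun i => fpt_nonneg _ _
    have hτn0 : ∀ n, 0 ≤ ⨅ i, FPT (x n i) (B i) :=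
      fun n => le_ciInf fun i => fpt_nonneg _ _
    have h1 : Tendsto (fun n => y j (⨅ i, FPT (x n i) (B i))) atTop (nhds (y j τ)) := by
      have hcw : ContinuousWithinAt (y j) (Set.Ici 0) τ := hy j τ hτ0
      exact hcw.tendsto.comp
        (tendsto_nhdsWithin_of_tendsto_nhds_of_eventually_within _ part1
          (Eventually.of_forall fun n => hτn0 n))
    have h2 : Tendsto (fun n =>
        x n j (⨅ i, FPT (x n i) (B i)) - y j (⨅ i, FPT (x n i) (B i)))
        atTop (nhds 0) := by
      rw [Metric.tendsto_atTop]
      intro ε hε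
      have hb := (tendsto_order.1 part1).2 (τ + 1) (by linarith)
      have hu := Metric.tendstoUniformlyOn_iff.1
        (hconv j (τ + 1) (by linarith)) ε hε
      obtain ⟨N, hN⟩ := ((hb.and hu).exists_forall_of_atTop)
      refine ⟨N, fun n hn => ?_⟩
      obtain ⟨hn1, hn2⟩ := hN n hn
      have := hn2 (⨅ i, FPT (x n i) (B i)) ⟨hτn0 n, hn1.le⟩
      rw [Real.dist_eq] at this ⊢
      rw [sub_zero]
      rw [abs_sub_comm] at this
      exact this
    have := h2.add h1
    simpa using this
  · -- eventually the argmin set is {jstar}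
    filter_upwards [hsep, hminxn] with n h1 h2
    ext j
    simp only [Set.mem_setOf_eq, Set.mem_singleton_iff]
    constructor
    · intro hj
      by_contra hne
      have := h1 j hne
      rw [h2] at hj
      exact absurd hj (ne_of_gt this)
    · intro hj
      rw [hj, h2]
end

section
/- Let $(x_n)$ be càdlàg functions converging locally uniformly to a continuous $y$ with $y(0) < B$, $T := T_B(y) = \widetilde{T}_B(y) < \infty$. Fix a reset value $r_0 < B$ and define the reset paths $x_n^*(t) = x_n(t)$ for $t < T_B(x_n)$ and $x_n^*(T_B(x_n)) = r_0$, similarly $y^*(t) = y(t)$ for $t < T$ and $y^*(T) = r_0$. Then $T_B(x_n) \to T$ and $x_n^*(T_B(x_n)) \to y^*(T)$, i.e., the post-reset values trivially converge (both equal $r_0$) while the reset times converge. -/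
open Filter MeasureTheory Set

/-- single-window reset building block. If càdlàg `xₙ → y`
locally uniformly, `y` is continuous with `y 0 < B`, finite passage time
`T = T_B(y) = 𝑇̃_B(y)`, and the paths are reset to `r₀ < B` at their passage
time, then the reset times converge, `T_B(xₙ) → T`, and the post-reset values
converge, `xₙ*(T_B(xₙ)) → y*(T)` (both being `r₀`). -/
theorem reset_window_convergence
    (x : ℕ → ℝ → ℝ) (y : ℝ → ℝ) (B r0 : ℝ)
    (hx : ∀ n, Cadlag (x n))
    (hy : ContinuousOn y (Set.Ici 0))
    (hy0 : y 0 < B) (hr0 : r0 < B)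
    (hfin : {t : ℝ | 0 < t ∧ B < y t}.Nonempty)
    (hH : FPT y B = HT y B)
    (hconv : ∀ s : ℝ, 0 ≤ s → TendstoUniformlyOn x y atTop (Set.Icc 0 s)) :
    let xstar : ℕ → ℝ → ℝ := fun n t => if t < FPT (x n) B then x n t else r0
    let ystar : ℝ → ℝ := fun t => if t < FPT y B then y t else r0
    Tendsto (fun n => FPT (x n) B) atTop (nhds (FPT y B)) ∧
    Tendsto (fun n => xstar n (FPT (x n) B)) atTop (nhds (ystar (FPT y B))) := by
  intro xstar ystar
  have hbdd : ∀ f : ℝ → ℝ, BddBelow {t : ℝ | 0 < t ∧ B < f t} :=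
    fun f => ⟨0, fun s hs => hs.1.le⟩
  set T := FPT y B with hTdef
  obtain ⟨s₀, hs₀pos, hs₀⟩ := hfin
  have hx0 : Tendsto (fun n => x n s₀) atTop (nhds (y s₀)) :=
    (hconv s₀ hs₀pos.le).tendsto_at ⟨hs₀pos.le, le_rfl⟩
  have hev0 : ∀ᶠ n in atTop, B < x n s₀ :=
    hx0.eventually (Filter.Tendsto.eventually_const_lt hs₀ tendsto_id)
  -- T > 0
  have hTpos : 0 < T := by
    have hcw : ContinuousWithinAt y (Set.Ici 0) 0 := hy 0 (Set.mem_Ici.2 le_rfl)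
    have hmem : {t : ℝ | y t < B} ∈ nhdsWithin (0 : ℝ) (Set.Ici 0) :=
      hcw (isOpen_Iio.mem_nhds hy0)
    obtain ⟨δ, hδpos, hδ⟩ := Metric.mem_nhdsWithin_iff.1 hmem
    have hle : δ ≤ T := by
      show δ ≤ sInf {t : ℝ | 0 < t ∧ B < y t}
      refine le_csInf ⟨s₀, ⟨hs₀pos, hs₀⟩⟩ ?_
      intro t ht
      by_contra h
      push_neg at h
      have : t ∈ Metric.ball (0 : ℝ) δ ∩ Set.Ici 0 := by
        constructor
        · simp [Real.dist_eq, abs_of_pos ht.1, h]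
        · exact ht.1.le
      exact absurd (hδ this) (not_lt.2 ht.2.le)
    linarith
  have hmain : Tendsto (fun n => FPT (x n) B) atTop (nhds T) := by
    refine tendsto_order.2 ⟨?_, ?_⟩
    · -- a < T eventually a < FPT (x n) B
      intro a ha
      set b : ℝ := max ((a + T) / 2) 0 with hbdefn
      have hab : a < b := by
        rcases le_or_gt 0 a with h | h
        · exact lt_max_iff.2 (Or.inl (by linarith))
        · exact lt_max_iff.2 (Or.inr h)
      have hb0 : (0 : ℝ) ≤ b := le_max_right _ _
      have hbT : b < T := max_lt (by linarith) hTpos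
      -- y < B on [0, b]
      have hyb : ∀ t ∈ Set.Icc (0 : ℝ) b, y t < B := by
        intro t ht
        by_contra h
        push_neg at h
        have htT : t < T := lt_of_le_of_lt ht.2 hbT
        have ht0 : 0 < t := by
          rcases ht.1.lt_or_eq with h1 | h1
          · exact h1
          · exfalso; rw [← h1] at h; linarith
        rcases h.lt_or_eq with h1 | h1
        · have : T ≤ t := csInf_le (hbdd y) ⟨ht0, h1⟩
          linarith
        · have : T ≤ t := by
            rw [hH]
            show sInf {t : ℝ | 0 < t ∧ y t = B} ≤ t
            exact csInf_le ⟨0, fun s hs => hs.1.le⟩ ⟨ht0, h1.symm⟩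
          linarith
      -- max of y on [0, b] is < B
      obtain ⟨t₀, ht₀mem, ht₀max⟩ :=
        isCompact_Icc.exists_isMaxOn (Set.nonempty_Icc.2 hb0)
          (hy.mono (fun t ht => ht.1))
      have hm : y t₀ < B := hyb t₀ ht₀mem
      have hε : (0 : ℝ) < B - y t₀ := by linarith
      have hev1 : ∀ᶠ n in atTop, ∀ t ∈ Set.Icc (0 : ℝ) b,
          dist (y t) (x n t) < B - y t₀ :=
        (Metric.tendstoUniformlyOn_iff.1 (hconv b hb0)) _ hε
      filter_upwards [hev0, hev1] with n hn0 hn1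
      have hge : b ≤ FPT (x n) B := by
        show b ≤ sInf {t : ℝ | 0 < t ∧ B < x n t}
        refine le_csInf ⟨s₀, ⟨hs₀pos, hn0⟩⟩ ?_
        intro s hs
        by_contra h
        push_neg at h
        have hsb : s ∈ Set.Icc (0 : ℝ) b := ⟨hs.1.le, h.le⟩
        have hd := hn1 s hsb
        rw [Real.dist_eq] at hd
        have habs := abs_lt.1 hd
        have hys : y s ≤ y t₀ := ht₀max hsb
        have : x n s < B := by linarith [habs.1, habs.2]
        exact absurd hs.2 (not_lt.2 this.le)
      linarith
    · -- T < a eventually FPT (x n) B < a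
      intro a ha
      obtain ⟨s, hs, hsa⟩ := (csInf_lt_iff (hbdd y) ⟨s₀, hs₀pos, hs₀⟩).1 ha
      have hxs : Tendsto (fun n => x n s) atTop (nhds (y s)) :=
        (hconv s hs.1.le).tendsto_at ⟨hs.1.le, le_rfl⟩
      have hev : ∀ᶠ n in atTop, B < x n s :=
        hxs.eventually (Filter.Tendsto.eventually_const_lt hs.2 tendsto_id)
      filter_upwards [hev] with n hn
      exact lt_of_le_of_lt (csInf_le (hbdd (x n)) ⟨hs.1, hn⟩) hsa
  refine ⟨hmain, ?_⟩
  have h1 : ∀ n, xstar n (FPT (x n) B) = r0 := fun n => if_neg (lt_irrefl _)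
  have h2 : ystar T = r0 := if_neg (lt_irrefl _)
  simp only [h1, h2]
  exact tendsto_const_nhds
end
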